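/- Let A be an associative ℚ(p)-algebra (completed so that power series in x and y make sense, e.g. A = ℚ(p)⟨⟨x,y⟩⟩/(yx − p·xy)), and suppose y·x = p·x·y. Then exp_p(x + y) = exp_p(x)·exp_p(y), where exp_p(z) = Σ_{n≥0} z^n/(n)_p! with (n)_p = 1 + p + ⋯ + p^{n-1}. -/
import Mathlib


open Finset

/-- The `p`-factorial `(n)_p! = (1)_p (2)_p ⋯ (n)_p` with `(j)_p = 1 + p + ⋯ + p^{j-1}`. -/
noncomputable def qFactorial {F : Type*} [Field F] (p : F) (n : ℕ) : F :=
  ∏ j ∈ range n, ∑ i ∈ range (j + 1), p ^ i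

/-- The `p`-integer `(m)_p = 1 + p + ⋯ + p^{m-1}`. -/
noncomputable def qNum {F : Type*} [Field F] (p : F) (m : ℕ) : F :=
  ∑ i ∈ range m, p ^ i

lemma qFactorial_zero {F : Type*} [Field F] (p : F) : qFactorial p 0 = 1 := by
  simp [qFactorial]

lemma qFactorial_succ {F : Type*} [Field F] (p : F) (n : ℕ) :
    qFactorial p (n + 1) = qFactorial p n * qNum p (n + 1) :=
  Finset.prod_range_succ _ _

lemma qNum_add {F : Type*} [Field F] (p : F) (a b : ℕ) :
    qNum p (a + b) = qNum p a + p ^ a * qNum p b := by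
  simp only [qNum, Finset.sum_range_add, pow_add, Finset.mul_sum]

lemma qNum_X_ne_zero (m : ℕ) : qNum (RatFunc.X : RatFunc ℚ) (m + 1) ≠ 0 := by
  have : qNum (RatFunc.X : RatFunc ℚ) (m + 1) =
      algebraMap (Polynomial ℚ) (RatFunc ℚ) (∑ i ∈ range (m + 1), Polynomial.X ^ i) := by
    simp [qNum, map_sum, map_pow, RatFunc.algebraMap_X]
  rw [this]
  intro hc
  have h0 : (∑ i ∈ range (m + 1), (Polynomial.X : Polynomial ℚ) ^ i) = 0 :=
    RatFunc.algebraMap_injective ℚ (by simpa using hc)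
  have := congrArg (Polynomial.eval (0 : ℚ)) h0
  simp [Polynomial.eval_finset_sum, Finset.sum_range_succ'] at this

lemma qFactorial_X_ne_zero (n : ℕ) : qFactorial (RatFunc.X : RatFunc ℚ) n ≠ 0 := by
  induction n with
  | zero => simp [qFactorial_zero]
  | succ n ih =>
    rw [qFactorial_succ]
    exact mul_ne_zero ih (qNum_X_ne_zero n)

/-- The `p`-binomial coefficient. -/
noncomputable def qBinom {F : Type*} [Field F] (p : F) (n k : ℕ) : F :=
  qFactorial p n / (qFactorial p k * qFactorial p (n - k))

lemma qBinom_zero_right (n : ℕ) : qBinom (RatFunc.X : RatFunc ℚ) n 0 = 1 := by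
  simp [qBinom, qFactorial_zero, div_self (qFactorial_X_ne_zero n)]

lemma qBinom_self (n : ℕ) : qBinom (RatFunc.X : RatFunc ℚ) n n = 1 := by
  simp [qBinom, qFactorial_zero, div_self (qFactorial_X_ne_zero n)]

lemma qBinom_pascal (j m : ℕ) :
    qBinom (RatFunc.X : RatFunc ℚ) (j + m + 2) (j + 1) =
      (RatFunc.X : RatFunc ℚ) ^ (m + 1) * qBinom (RatFunc.X : RatFunc ℚ) (j + m + 1) j +
        qBinom (RatFunc.X : RatFunc ℚ) (j + m + 1) (j + 1) := by
  have h1 : j + m + 2 - (j + 1) = m + 1 := by omega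
  have h2 : j + m + 1 - j = m + 1 := by omega
  have h3 : j + m + 1 - (j + 1) = m := by omega
  have h4 : j + m + 2 = (j + m + 1) + 1 := by omega
  simp only [qBinom, h1, h2, h3, h4]
  rw [qFactorial_succ, qFactorial_succ (RatFunc.X : RatFunc ℚ) j,
    qFactorial_succ (RatFunc.X : RatFunc ℚ) m]
  have hpas : qNum (RatFunc.X : RatFunc ℚ) (j + m + 1 + 1) =
      qNum (RatFunc.X : RatFunc ℚ) (m + 1) +
        (RatFunc.X : RatFunc ℚ) ^ (m + 1) * qNum (RatFunc.X : RatFunc ℚ) (j + 1) := by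
    have he : j + m + 1 + 1 = (m + 1) + (j + 1) := by omega
    rw [he, qNum_add]
  rw [hpas]
  have hfj := qFactorial_X_ne_zero j
  have hfm := qFactorial_X_ne_zero m
  have hnj := qNum_X_ne_zero j
  have hnm := qNum_X_ne_zero m
  field_simp
  ring

section Main

variable {A : Type*} [Ring A] [Algebra (RatFunc ℚ) A] (x y : A)
  (h : y * x = algebraMap (RatFunc ℚ) A RatFunc.X * (x * y))

include h

lemma ypow_mul_x (m : ℕ) :
    y ^ m * x = (RatFunc.X : RatFunc ℚ) ^ m • (x * y ^ m) := by
  induction m with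
  | zero => simp
  | succ m ih =>
    have hx : y * x = (RatFunc.X : RatFunc ℚ) • (x * y) := by
      rw [h, Algebra.smul_def]
    calc y ^ (m + 1) * x = y ^ m * (y * x) := by rw [pow_succ, mul_assoc]
      _ = y ^ m * ((RatFunc.X : RatFunc ℚ) • (x * y)) := by rw [hx]
      _ = (RatFunc.X : RatFunc ℚ) • (y ^ m * x * y) := by
          rw [mul_smul_comm, mul_assoc]
      _ = (RatFunc.X : RatFunc ℚ) • (((RatFunc.X : RatFunc ℚ) ^ m • (x * y ^ m)) * y) := by
          rw [ih]
      _ = (RatFunc.X : RatFunc ℚ) ^ (m + 1) • (x * y ^ (m + 1)) := by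
          rw [smul_mul_assoc, smul_smul, mul_assoc, ← pow_succ, ← pow_succ']

lemma qBinomial_theorem (n : ℕ) :
    (x + y) ^ n = ∑ k ∈ range (n + 1),
      qBinom (RatFunc.X : RatFunc ℚ) n k • (x ^ k * y ^ (n - k)) := by
  induction n with
  | zero => simp [qBinom_zero_right]
  | succ n ih =>
    rw [pow_succ, ih, Finset.sum_mul]
    have hterm : ∀ k ∈ range (n + 1),
        qBinom (RatFunc.X : RatFunc ℚ) n k • (x ^ k * y ^ (n - k)) * (x + y) =
          ((RatFunc.X : RatFunc ℚ) ^ (n - k) * qBinom (RatFunc.X : RatFunc ℚ) n k) •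
              (x ^ (k + 1) * y ^ (n - k)) +
            qBinom (RatFunc.X : RatFunc ℚ) n k • (x ^ k * y ^ (n + 1 - k)) := by
      intro k hk
      have hy : y ^ (n - k) * x = (RatFunc.X : RatFunc ℚ) ^ (n - k) • (x * y ^ (n - k)) :=
        ypow_mul_x x y h _
      have hnk : n + 1 - k = (n - k) + 1 := by
        have := Nat.lt_succ_iff.mp (Finset.mem_range.mp hk); omega
      rw [mul_add]
      congr 1
      · rw [smul_mul_assoc, mul_assoc, hy, mul_smul_comm, smul_smul,
          mul_comm (qBinom (RatFunc.X : RatFunc ℚ) n k), ← mul_assoc, ← pow_succ]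
      · rw [smul_mul_assoc, mul_assoc, hnk, pow_succ]
    rw [Finset.sum_congr rfl hterm, Finset.sum_add_distrib]
    rw [Finset.sum_range_succ' (fun k => qBinom (RatFunc.X : RatFunc ℚ) (n + 1) k •
      (x ^ k * y ^ (n + 1 - k))) (n + 1)]
    rw [Finset.sum_range_succ (fun k => qBinom (RatFunc.X : RatFunc ℚ) (n + 1) (k + 1) •
      (x ^ (k + 1) * y ^ (n + 1 - (k + 1))))]
    rw [Finset.sum_range_succ (fun k => ((RatFunc.X : RatFunc ℚ) ^ (n - k) *
      qBinom (RatFunc.X : RatFunc ℚ) n k) • (x ^ (k + 1) * y ^ (n - k)))]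
    rw [Finset.sum_range_succ' (fun k => qBinom (RatFunc.X : RatFunc ℚ) n k •
      (x ^ k * y ^ (n + 1 - k)))]
    have hmid : ∀ k ∈ range n,
        qBinom (RatFunc.X : RatFunc ℚ) (n + 1) (k + 1) • (x ^ (k + 1) * y ^ (n + 1 - (k + 1))) =
          ((RatFunc.X : RatFunc ℚ) ^ (n - k) * qBinom (RatFunc.X : RatFunc ℚ) n k) •
              (x ^ (k + 1) * y ^ (n - k)) +
            qBinom (RatFunc.X : RatFunc ℚ) n (k + 1) •
              (x ^ (k + 1) * y ^ (n + 1 - (k + 1))) := by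
      intro k hk
      have hkn : k < n := Finset.mem_range.mp hk
      obtain ⟨m, rfl⟩ : ∃ m, n = k + m + 1 := ⟨n - k - 1, by omega⟩
      have e1 : k + m + 1 + 1 = k + m + 2 := by omega
      have e2 : k + m + 1 - k = m + 1 := by omega
      have e4 : k + m + 1 + 1 - (k + 1) = m + 1 := by omega
      rw [e4, e2, e1, qBinom_pascal, add_smul]
    rw [Finset.sum_congr rfl hmid, Finset.sum_add_distrib]
    simp only [Nat.sub_self, Nat.add_sub_cancel, pow_zero, one_mul, mul_one, qBinom_self,
      qBinom_zero_right, one_smul, Nat.sub_zero]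
    abel

end Main

/-- Schützenberger's addition formula: if `x, y` in an associative `ℚ(p)`-algebra `A`
satisfy `y·x = p·x·y` (with `p` the variable of `ℚ(p)`), then
`exp_p(x + y) = exp_p(x) · exp_p(y)`, where `exp_p(z) = ∑_{n≥0} z^n/(n)_p!`.
The series are recorded in the completion `A[[t]]`, i.e. as the power series
`∑_n ((n)_p!)⁻¹ • z^n · t^n ∈ A[[t]]`, which encodes the coefficientwise identity. -/
theorem qExp_add_of_qCommute {A : Type*} [Ring A] [Algebra (RatFunc ℚ) A] (x y : A)
    (h : y * x = algebraMap (RatFunc ℚ) A RatFunc.X * (x * y)) :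
    (PowerSeries.mk fun n => (qFactorial (RatFunc.X : RatFunc ℚ) n)⁻¹ • (x + y) ^ n) =
      (PowerSeries.mk fun n => (qFactorial (RatFunc.X : RatFunc ℚ) n)⁻¹ • x ^ n) *
        (PowerSeries.mk fun n => (qFactorial (RatFunc.X : RatFunc ℚ) n)⁻¹ • y ^ n) := by
  ext n
  rw [PowerSeries.coeff_mul, Finset.Nat.sum_antidiagonal_eq_sum_range_succ_mk]
  simp only [PowerSeries.coeff_mk]
  rw [qBinomial_theorem x y h n, Finset.smul_sum]
  refine Finset.sum_congr rfl fun k hk => ?_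
  rw [smul_mul_smul_comm, smul_smul]
  congr 1
  have hn := qFactorial_X_ne_zero n
  have hk' := qFactorial_X_ne_zero k
  have hnk := qFactorial_X_ne_zero (n - k)
  rw [qBinom]
  field_simp
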